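/- Let F be a field of characteristic 0 and let φ ∈ F[x,y,z] be a homogeneous polynomial of odd degree 2n+1 satisfying -2y·φ_x + z·φ_y = 0. Then z divides φ, i.e., φ = z·ψ for some homogeneous polynomial ψ of degree 2n which also satisfies -2y·ψ_x + z·ψ_y = 0. -/

import Mathlib

open MvPolynomial

private lemma coeff_pderiv_aux {σ R : Type*} [CommSemiring R] (i : σ) (m : σ →₀ ℕ)
    (p : MvPolynomial σ R) :
    coeff m (pderiv i p) = (m i + 1 : ℕ) * coeff (m + Finsupp.single i 1) p := by
  classical
  induction p using MvPolynomial.induction_on' with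
  | add p q hp hq => simp [hp, hq, mul_add]
  | monomial s a =>
    rw [pderiv_monomial]
    simp only [coeff_monomial]
    by_cases h : s = m + Finsupp.single i 1
    · subst h
      rw [if_pos, if_pos rfl]
      · simp [Finsupp.single_apply]; ring
      · simp
    · rw [if_neg h]
      by_cases h2 : s - Finsupp.single i 1 = m
      · rw [if_pos h2]
        have hsi : s i = 0 := by
          by_contra hne
          apply h
          ext j
          simp only [← h2, Finsupp.coe_add, Pi.add_apply, Finsupp.coe_tsub, Pi.sub_apply,
            Finsupp.single_apply]
          rcases eq_or_ne i j with rfl | hij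
          · simp; omega
          · simp [hij]
        simp [hsi]
      · rw [if_neg h2, mul_zero]

private noncomputable def mon (a b k : ℕ) : Fin 3 →₀ ℕ :=
  Finsupp.single 0 a + Finsupp.single 1 b + Finsupp.single 2 k

private lemma mon_apply0 (a b k : ℕ) : mon a b k 0 = a := by
  simp [mon, Finsupp.single_apply]
private lemma mon_apply1 (a b k : ℕ) : mon a b k 1 = b := by
  simp [mon, Finsupp.single_apply]
private lemma mon_apply2 (a b k : ℕ) : mon a b k 2 = k := by
  simp [mon, Finsupp.single_apply]

private lemma mon_eq_self (m : Fin 3 →₀ ℕ) : m = mon (m 0) (m 1) (m 2) := by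
  ext j
  fin_cases j <;> simp [mon, Finsupp.single_apply]

private lemma mon_add2 (a b k : ℕ) : mon a b (k + 1) = Finsupp.single 2 1 + mon a b k := by
  ext j; fin_cases j <;> simp [mon, Finsupp.single_apply] <;> omega

private lemma mon_add1 (a b k : ℕ) : mon a (b + 1) k = Finsupp.single 1 1 + mon a b k := by
  ext j; fin_cases j <;> simp [mon, Finsupp.single_apply] <;> omega

private lemma mon_radd0 (a b k : ℕ) : mon a b k + Finsupp.single 0 1 = mon (a + 1) b k := by
  ext j; fin_cases j <;> simp [mon, Finsupp.single_apply]

private lemma mon_radd1 (a b k : ℕ) : mon a b k + Finsupp.single 1 1 = mon a (b + 1) k := by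
  ext j; fin_cases j <;> simp [mon, Finsupp.single_apply]

private lemma deg3 (d : Fin 3 →₀ ℕ) : d.degree = d 0 + d 1 + d 2 := by
  rw [Finsupp.degree_apply, Finset.sum_subset (Finset.subset_univ _)
    (fun i _ h => Finsupp.notMem_support_iff.mp h), Fin.sum_univ_three]


/-- A homogeneous solution of -2y φ_x + z φ_y = 0 of odd degree 2n+1 is z ψ, with ψ a
homogeneous solution of degree 2n. -/
theorem odd_degree_solution (F : Type*) [Field F] [CharZero F]
    (n : ℕ) (φ : MvPolynomial (Fin 3) F)
    (hhom : φ.IsHomogeneous (2 * n + 1))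
    (hpde : -(2 * X 1 * pderiv 0 φ) + X 2 * pderiv 1 φ = 0) :
    ∃ ψ : MvPolynomial (Fin 3) F,
      ψ.IsHomogeneous (2 * n) ∧
      -(2 * X 1 * pderiv 0 ψ) + X 2 * pderiv 1 ψ = 0 ∧
      φ = X 2 * ψ := by

  classical
  set c : ℕ → ℕ → ℕ → F := fun a b k => coeff (mon a b k) φ with hc
  have hBA : X 2 * pderiv 1 φ = C 2 * (X 1 * pderiv 0 φ) := by
    rw [show (C 2 : MvPolynomial (Fin 3) F) = 2 from map_ofNat _ 2]
    linear_combination hpde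
  have key : ∀ m : Fin 3 →₀ ℕ,
      coeff m (X 2 * pderiv 1 φ) = 2 * coeff m (X 1 * pderiv 0 φ) := by
    intro m; rw [hBA, coeff_C_mul]
  have hL : ∀ a b k : ℕ, coeff (mon a (b+1) (k+1)) (X 2 * pderiv 1 φ)
      = ((b : F) + 2) * c a (b+2) k := by
    intro a b k
    rw [mon_add2, coeff_X_mul, coeff_pderiv_aux, mon_radd1, mon_apply1]
    push_cast; ring_nf; rfl
  have hR : ∀ a b k : ℕ, coeff (mon a (b+1) (k+1)) (X 1 * pderiv 0 φ)
      = ((a : F) + 1) * c (a+1) b (k+1) := by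
    intro a b k
    rw [show mon a (b+1) (k+1) = Finsupp.single 1 1 + mon a b (k+1) from mon_add1 _ _ _,
      coeff_X_mul, coeff_pderiv_aux, mon_radd0, mon_apply0]
    push_cast; ring_nf; rfl
  have hI : ∀ a b k : ℕ, ((b : F) + 2) * c a (b+2) k
      = 2 * ((a : F) + 1) * c (a+1) b (k+1) := by
    intro a b k
    have h := key (mon a (b+1) (k+1))
    rw [hL, hR] at h
    rw [h]; ring
  have cast_ne : ∀ a : ℕ, ((a : F) + 1) ≠ 0 := by
    intro a
    have : ((a + 1 : ℕ) : F) ≠ 0 := Nat.cast_ne_zero.mpr (Nat.succ_ne_zero a)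
    push_cast at this; exact this
  have hII : ∀ a b : ℕ, c (a+1) b 0 = 0 := by
    intro a b
    have h := key (mon a (b+1) 0)
    rw [coeff_X_mul'] at h
    simp only [Finsupp.mem_support_iff, mon_apply2, ne_eq, not_true_eq_false, if_neg,
      not_false_eq_true] at h
    rw [show mon a (b+1) 0 = Finsupp.single 1 1 + mon a b 0 from mon_add1 _ _ _,
      coeff_X_mul, coeff_pderiv_aux, mon_radd0, mon_apply0] at h
    have h2 := h.symm
    push_cast at h2
    rcases mul_eq_zero.mp h2 with h' | h'
    · exact absurd h' two_ne_zero
    · exact (mul_eq_zero.mp h').resolve_left (cast_ne a)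
  have hIII : ∀ a k : ℕ, c a 1 k = 0 := by
    intro a k
    have h := key (mon a 0 (k+1))
    rw [coeff_X_mul' _ 1] at h
    simp only [Finsupp.mem_support_iff, mon_apply1, ne_eq, not_true_eq_false, if_neg,
      not_false_eq_true, mul_zero] at h
    rw [mon_add2, coeff_X_mul, coeff_pderiv_aux, mon_radd1, mon_apply1] at h
    simpa using h
  have hchain : ∀ i, i ≤ n → c (n - i) (2 * i + 1) (n - i) = 0 := by
    intro i
    induction i with
    | zero => intro _; simpa using hIII (n - 0) (n - 0)
    | succ i ih =>
      intro hin
      have hi : i ≤ n := by omega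
      have h0 := ih hi
      have h := hI (n - i - 1) (2 * i + 1) (n - i - 1)
      rw [show n - i - 1 + 1 = n - i from by omega, h0, mul_zero] at h
      have h2 : c (n - i - 1) (2 * i + 1 + 2) (n - i - 1) = 0 := by
        rcases mul_eq_zero.mp h with h' | h'
        · exfalso
          have h'' : ((2 * i + 3 : ℕ) : F) = 0 := by push_cast at h' ⊢; linear_combination h'
          exact Nat.cast_ne_zero.mpr (by omega) h''
        · exact h'
      rw [show n - (i + 1) = n - i - 1 from by omega, show 2 * (i + 1) + 1 = 2 * i + 1 + 2 from
        by omega]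
      exact h2
  have hz : ∀ m : Fin 3 →₀ ℕ, m 2 = 0 → coeff m φ = 0 := by
    intro m hm2
    rw [mon_eq_self m, hm2]
    rcases Nat.eq_zero_or_pos (m 0) with h0 | h0
    · rw [h0]
      by_cases hb : m 1 = 2 * n + 1
      · rw [hb]
        have h := hchain n le_rfl
        simpa using h
      · apply hhom.coeff_eq_zero
        rw [deg3, mon_apply0, mon_apply1, mon_apply2]
        simpa using hb
    · obtain ⟨a, ha⟩ : ∃ a, m 0 = a + 1 := ⟨m 0 - 1, by omega⟩
      rw [ha]
      exact hII a (m 1)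
  -- construct ψ
  set ψ := φ.divMonomial (Finsupp.single 2 1) with hψ
  have hmod : φ.modMonomial (Finsupp.single 2 1) = 0 := by
    rw [MvPolynomial.eq_zero_iff]
    intro d
    by_cases hle : Finsupp.single 2 1 ≤ d
    · exact coeff_modMonomial_of_le _ hle
    · rw [coeff_modMonomial_of_not_le _ hle]
      apply hz
      rw [Finsupp.single_le_iff] at hle
      omega
  have hfac : φ = X 2 * ψ := by
    conv_lhs => rw [← divMonomial_add_modMonomial_single φ 2]
    rw [hmod, add_zero]
  have hψcoeff : ∀ d : Fin 3 →₀ ℕ, coeff d ψ = coeff (Finsupp.single 2 1 + d) φ :=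
    fun d => coeff_divMonomial _ _ _
  refine ⟨ψ, ?_, ?_, hfac⟩
  · intro d hd
    rw [hψcoeff] at hd
    have hdeg := hhom hd
    rw [show (Finsupp.weight 1 : (Fin 3 →₀ ℕ) →+ ℕ) = Finsupp.weight (fun _ => 1) from rfl,
      ← Finsupp.degree_eq_weight_one] at hdeg ⊢
    have e0 : ((Finsupp.single (2 : Fin 3) 1 + d : Fin 3 →₀ ℕ)) 0 = d 0 := by
      simp [Finsupp.single_apply]
    have e1 : ((Finsupp.single (2 : Fin 3) 1 + d : Fin 3 →₀ ℕ)) 1 = d 1 := by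
      simp [Finsupp.single_apply]
    have e2 : ((Finsupp.single (2 : Fin 3) 1 + d : Fin 3 →₀ ℕ)) 2 = 1 + d 2 := by
      simp
    rw [deg3, e0, e1, e2] at hdeg
    rw [deg3]
    omega
  · have h02 : (2 : Fin 3) ≠ 0 := by decide
    have h12 : (2 : Fin 3) ≠ 1 := by decide
    have hE : X 2 * (-(2 * X 1 * pderiv 0 ψ) + X 2 * pderiv 1 ψ) = 0 := by
      rw [hfac, pderiv_mul, pderiv_mul, pderiv_X_of_ne h02, pderiv_X_of_ne h12] at hpde
      linear_combination hpde
    rcases mul_eq_zero.mp hE with h | h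
    · exact absurd h (X_ne_zero 2)
    · exact h
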